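/- Consider two agents ag1 and ag2 modeled as a joint transition system executing the shared-belief protocol (plans rsb1, rsb2, rsb3): ag1 starts with goal reachSharedBel(b, ag2); rsb1 adds b[self] when not believed; rsb2 sends tell(b) to the other agent (which adds b[sender] to the receiver's belief base) and sends achieve(reachSharedBel(b, self)); rsb3 terminates when both b[self] and b[other] are believed. Assuming reliable message delivery and fair scheduling (every enabled step is eventually taken), every fair execution eventually reaches a state in which ag1 believes b[self] and b[ag2], and ag2 believes b[self] and b[ag1]. -/

import Mathlib

/-- Joint state of the shared-belief protocol: the four belief flags. -/
structure SBState where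
  ag1Self : Bool   -- ag1 believes b[self]
  ag1Other : Bool  -- ag1 believes b[ag2]
  ag2Self : Bool   -- ag2 believes b[self]
  ag2Other : Bool  -- ag2 believes b[ag1]
deriving DecidableEq

/-- The protocol transitions: (0) ag1 adds b[self] (rsb1); (1) ag1's tell makes ag2
believe b[ag1]; (2) ag1's achieve request starts ag2's protocol, which adds b[self]
at ag2; (3) ag2's tell makes ag1 believe b[ag2]. -/
inductive SBTrans | t0 | t1 | t2 | t3
deriving DecidableEq

def applyT : SBTrans → SBState → SBState
  | .t0, s => { s with ag1Self := true }
  | .t1, s => { s with ag2Other := true }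
  | .t2, s => { s with ag2Self := true }
  | .t3, s => { s with ag1Other := true }

/-- A transition is enabled when its precondition in the protocol holds and its
effect has not been achieved yet. -/
def enabledT : SBTrans → SBState → Prop
  | .t0, s => s.ag1Self = false
  | .t1, s => s.ag1Self = true ∧ s.ag2Other = false
  | .t2, s => s.ag2Other = true ∧ s.ag2Self = false
  | .t3, s => s.ag2Self = true ∧ s.ag1Other = false

def allShared (s : SBState) : Prop :=
  s.ag1Self = true ∧ s.ag1Other = true ∧ s.ag2Self = true ∧ s.ag2Other = true

/-- Reachability of shared beliefs: under reliable delivery and fair scheduling,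
every fair execution starting from the initial state eventually reaches a state
where both agents believe b[self] and b[other]. -/
theorem shared_beliefs_eventually_reached (f : ℕ → SBState)
    (hinit : f 0 = ⟨false, false, false, false⟩)
    (hstep : ∀ n, f (n + 1) = f n ∨
      ∃ t : SBTrans, enabledT t (f n) ∧ f (n + 1) = applyT t (f n))
    (hfair : ∀ (t : SBTrans) (n : ℕ),
      (∀ m, n ≤ m → enabledT t (f m)) → ∃ m, n ≤ m ∧ f (m + 1) = applyT t (f m)) :
    ∃ n, allShared (f n) := by
  -- monotonicity of each flag
  have mono : ∀ (g : SBState → Bool), (∀ t s, g s = true → g (applyT t s) = true) →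
      ∀ n m, n ≤ m → g (f n) = true → g (f m) = true := by
    intro g hg n m hnm h
    induction m, hnm using Nat.le_induction with
    | base => exact h
    | succ k hk ih =>
      rcases hstep k with h1 | ⟨t, _, h2⟩
      · rw [h1]; exact ih
      · rw [h2]; exact hg t _ ih
  have m1 := mono (fun s => s.ag1Self) (by intro t s h; cases t <;> simpa [applyT] using h)
  have m2 := mono (fun s => s.ag2Other) (by intro t s h; cases t <;> simpa [applyT] using h)
  have m3 := mono (fun s => s.ag2Self) (by intro t s h; cases t <;> simpa [applyT] using h)
  have m4 := mono (fun s => s.ag1Other) (by intro t s h; cases t <;> simpa [applyT] using h)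
  -- eventually ag1Self
  have h1 : ∃ n, (f n).ag1Self = true := by
    by_contra h
    push_neg at h
    obtain ⟨m, -, hm⟩ := hfair .t0 0 (fun m _ => by
      simpa [enabledT] using Bool.eq_false_iff.mpr (h m))
    exact h (m + 1) (by rw [hm]; simp [applyT])
  obtain ⟨n1, h1⟩ := h1
  have h2 : ∃ n, n1 ≤ n ∧ (f n).ag2Other = true := by
    by_contra h
    push_neg at h
    obtain ⟨m, hm1, hm⟩ := hfair .t1 n1 (fun m hm => by
      exact ⟨m1 n1 m hm h1, Bool.eq_false_iff.mpr (h m hm)⟩)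
    exact h (m + 1) (le_trans hm1 (Nat.le_succ m)) (by rw [hm]; simp [applyT])
  obtain ⟨n2, hn12, h2⟩ := h2
  have h3 : ∃ n, n2 ≤ n ∧ (f n).ag2Self = true := by
    by_contra h
    push_neg at h
    obtain ⟨m, hm1, hm⟩ := hfair .t2 n2 (fun m hm => by
      exact ⟨m2 n2 m hm h2, Bool.eq_false_iff.mpr (h m hm)⟩)
    exact h (m + 1) (le_trans hm1 (Nat.le_succ m)) (by rw [hm]; simp [applyT])
  obtain ⟨n3, hn23, h3⟩ := h3
  have h4 : ∃ n, n3 ≤ n ∧ (f n).ag1Other = true := by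
    by_contra h
    push_neg at h
    obtain ⟨m, hm1, hm⟩ := hfair .t3 n3 (fun m hm => by
      exact ⟨m3 n3 m hm h3, Bool.eq_false_iff.mpr (h m hm)⟩)
    exact h (m + 1) (le_trans hm1 (Nat.le_succ m)) (by rw [hm]; simp [applyT])
  obtain ⟨n4, hn34, h4⟩ := h4
  refine ⟨n4, ?_, h4, ?_, ?_⟩
  · exact m1 n1 n4 (le_trans hn12 (le_trans hn23 hn34)) h1
  · exact m3 n3 n4 hn34 h3
  · exact m2 n2 n4 (le_trans hn23 hn34) h2
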